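/- (Theorem 4: convergence of alternate SGD on the augmented bilinear system) Let A be an invertible r×r real matrix with largest singular value σ_max, let b, c ∈ ℝʳ, and let B = (AAᵀ)^{1/2}. Let ψ* = A⁻¹b and θ* = (Aᵀ)⁻¹c, so Aψ* = b and Aᵀθ* = c. Define L(ψ, φ, θ) = θᵀAψ − bᵀθ − cᵀψ + (1/2)(θ + φ)ᵀB(θ + φ) and run alternate SGD with step size η satisfying 0 < η·σ_max < 1: ψ_{t+1} = ψ_t + η(Aᵀθ_t − c), φ_{t+1} = φ_t − ηB(θ_t + φ_t), θ_{t+1} = θ_t − η(Aψ_{t+1} − b + B(θ_t + φ_{t+1})). Then the iterates converge to the optimum: ψ_t → ψ*, θ_t → θ*, and φ_t → −θ* as t → ∞. -/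

import Mathlib

set_option maxHeartbeats 1000000

open Matrix Filter


noncomputable def lyapP00 (m : ℝ) : ℝ := (20 - 32*m + 40*m^2 - 38*m^3 + 20*m^4 - 4*m^5 + m^6 + (-1)*m^7)
noncomputable def lyapP01 (m : ℝ) : ℝ := (6*m^2 - 3*m^3 + m^4 - 5*m^5 + 6*m^6 - 2*m^7)
noncomputable def lyapP02 (m : ℝ) : ℝ := (8*m - 20*m^2 + 23*m^3 - 20*m^4 + 17*m^5 - 12*m^6 + 5*m^7 + (-1)*m^8)
noncomputable def lyapP11 (m : ℝ) : ℝ := (12*m^2 - 14*m^3 + 18*m^4 - 20*m^5 + 13*m^6 - 3*m^7)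
noncomputable def lyapP12 (m : ℝ) : ℝ := (-8*m^2 + 18*m^3 - 22*m^4 + 26*m^5 - 23*m^6 + 11*m^7 - 2*m^8)
noncomputable def lyapP22 (m : ℝ) : ℝ := (12*m^2 - 30*m^3 + 37*m^4 - 41*m^5 + 41*m^6 - 27*m^7 + 9*m^8 + (-1)*m^9)
noncomputable def lyapK (m : ℝ) : ℝ := m^3*(1-m)*(m^3+2*m^2-8*m+8)

noncomputable def lyapV (m x v w : ℝ) : ℝ :=
  lyapP00 m * x^2 + 2*lyapP01 m * x * v + 2*lyapP02 m * x * w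
  + lyapP11 m * v^2 + 2*lyapP12 m * v * w + lyapP22 m * w^2

lemma lyapK_pos {m : ℝ} (hm0 : 0 < m) (hm1 : m < 1) : 0 < lyapK m := by
  have hu : (0:ℝ) < 1 - m := by linarith
  unfold lyapK
  have h1 : 0 < m^3 + 2*m^2 - 8*m + 8 := by linarith [pow_pos hm0 3, pow_pos hm0 2]
  positivity

lemma lyapV_step (m x v w : ℝ) :
    lyapV m (x + m^2 * v) (-x + (1-m) * v + (m^2-m) * w) (-(m * v) + (1-m) * w)
      = lyapV m x v w - lyapK m * (x^2 + v^2 + w^2) := by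
  unfold lyapV lyapK lyapP00 lyapP01 lyapP02 lyapP11 lyapP12 lyapP22
  ring

lemma lyapV_nonneg {m : ℝ} (hm0 : 0 < m) (hm1 : m < 1) (x v w : ℝ) :
    0 ≤ lyapV m x v w := by
  have hu : (0:ℝ) < 1 - m := by linarith
  have hp00 : 0 < lyapP00 m := by
    unfold lyapP00
    linarith [mul_pos (pow_pos hm0 0) (pow_pos hu 7), mul_pos (pow_pos hm0 1) (pow_pos hu 6), mul_pos (pow_pos hm0 2) (pow_pos hu 5), mul_pos (pow_pos hm0 3) (pow_pos hu 4), mul_pos (pow_pos hm0 4) (pow_pos hu 3), mul_pos (pow_pos hm0 5) (pow_pos hu 2), mul_pos (pow_pos hm0 6) (pow_pos hu 1), mul_pos (pow_pos hm0 7) (pow_pos hu 0)]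
  have hR2 : (0:ℝ) < (240 - 664*m + 1252*m^2 - 1956*m^3 + 2371*m^4 - 2222*m^5 + 1701*m^6 - 1042*m^7 + 437*m^8 - 86*m^9 - 11*m^10 + 8*m^11 + (-1)*m^12) := by
    linarith [mul_pos (pow_pos hm0 0) (pow_pos hu 12), mul_pos (pow_pos hm0 1) (pow_pos hu 11), mul_pos (pow_pos hm0 2) (pow_pos hu 10), mul_pos (pow_pos hm0 3) (pow_pos hu 9), mul_pos (pow_pos hm0 4) (pow_pos hu 8), mul_pos (pow_pos hm0 5) (pow_pos hu 7), mul_pos (pow_pos hm0 6) (pow_pos hu 6), mul_pos (pow_pos hm0 7) (pow_pos hu 5), mul_pos (pow_pos hm0 8) (pow_pos hu 4), mul_pos (pow_pos hm0 9) (pow_pos hu 3), mul_pos (pow_pos hm0 10) (pow_pos hu 2), mul_pos (pow_pos hm0 11) (pow_pos hu 1), mul_pos (pow_pos hm0 12) (pow_pos hu 0)]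
  have hG : (0:ℝ) < (16640 - 77824*m + 218240*m^2 - 468160*m^3 + 810448*m^4 - 1162704*m^5 + 1414132*m^6 - 1470912*m^7 + 1306068*m^8 - 985934*m^9 + 626800*m^10 - 326786*m^11 + 132549*m^12 - 38325*m^13 + 6659*m^14 - 271*m^15 - 245*m^16 + 191*m^17 - 108*m^18 + 28*m^19 + 2*m^20 - 2*m^21) := by
    linarith [mul_pos (pow_pos hm0 0) (pow_pos hu 21), mul_pos (pow_pos hm0 1) (pow_pos hu 20), mul_pos (pow_pos hm0 2) (pow_pos hu 19), mul_pos (pow_pos hm0 3) (pow_pos hu 18), mul_pos (pow_pos hm0 4) (pow_pos hu 17), mul_pos (pow_pos hm0 5) (pow_pos hu 16), mul_pos (pow_pos hm0 6) (pow_pos hu 15), mul_pos (pow_pos hm0 7) (pow_pos hu 14), mul_pos (pow_pos hm0 8) (pow_pos hu 13), mul_pos (pow_pos hm0 9) (pow_pos hu 12), mul_pos (pow_pos hm0 10) (pow_pos hu 11), mul_pos (pow_pos hm0 11) (pow_pos hu 10), mul_pos (pow_pos hm0 12) (pow_pos hu 9), mul_pos (pow_pos hm0 13) (pow_pos hu 8),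 mul_pos (pow_pos hm0 14) (pow_pos hu 7), mul_pos (pow_pos hm0 15) (pow_pos hu 6), mul_pos (pow_pos hm0 16) (pow_pos hu 5), mul_pos (pow_pos hm0 17) (pow_pos hu 4), mul_pos (pow_pos hm0 18) (pow_pos hu 3), mul_pos (pow_pos hm0 19) (pow_pos hu 2), mul_pos (pow_pos hm0 20) (pow_pos hu 1), mul_pos (pow_pos hm0 21) (pow_pos hu 0)]
  have hR : (0:ℝ) < m^2 * (240 - 664*m + 1252*m^2 - 1956*m^3 + 2371*m^4 - 2222*m^5 + 1701*m^6 - 1042*m^7 + 437*m^8 - 86*m^9 - 11*m^10 + 8*m^11 + (-1)*m^12) := mul_pos (pow_pos hm0 2) hR2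
  have key : lyapP00 m * (m^2 * (240 - 664*m + 1252*m^2 - 1956*m^3 + 2371*m^4 - 2222*m^5 + 1701*m^6 - 1042*m^7 + 437*m^8 - 86*m^9 - 11*m^10 + 8*m^11 + (-1)*m^12)) * lyapV m x v w
      = (m^2 * (240 - 664*m + 1252*m^2 - 1956*m^3 + 2371*m^4 - 2222*m^5 + 1701*m^6 - 1042*m^7 + 437*m^8 - 86*m^9 - 11*m^10 + 8*m^11 + (-1)*m^12)) * (lyapP00 m * x + lyapP01 m * v + lyapP02 m * w)^2
        + ((m^2 * (240 - 664*m + 1252*m^2 - 1956*m^3 + 2371*m^4 - 2222*m^5 + 1701*m^6 - 1042*m^7 + 437*m^8 - 86*m^9 - 11*m^10 + 8*m^11 + (-1)*m^12)) * v + (-160*m^2 + 568*m^3 - 1192*m^4 + 2042*m^5 - 2767*m^6 + 2891*m^7 - 2426*m^8 + 1651*m^9 - 818*m^10 + 226*m^11 + (-1)*m^12 - 17*m^13 + 3*m^14) * w)^2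
        + m^4*(1-m)*(16640 - 77824*m + 218240*m^2 - 468160*m^3 + 810448*m^4 - 1162704*m^5 + 1414132*m^6 - 1470912*m^7 + 1306068*m^8 - 985934*m^9 + 626800*m^10 - 326786*m^11 + 132549*m^12 - 38325*m^13 + 6659*m^14 - 271*m^15 - 245*m^16 + 191*m^17 - 108*m^18 + 28*m^19 + 2*m^20 - 2*m^21) * w^2 := by
    unfold lyapV lyapP00 lyapP01 lyapP02 lyapP11 lyapP12 lyapP22
    ring
  have h2 : 0 ≤ lyapP00 m * (m^2 * (240 - 664*m + 1252*m^2 - 1956*m^3 + 2371*m^4 - 2222*m^5 + 1701*m^6 - 1042*m^7 + 437*m^8 - 86*m^9 - 11*m^10 + 8*m^11 + (-1)*m^12)) * lyapV m x v w := by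
    rw [key]
    have t3 : (0:ℝ) ≤ m^4*(1-m)*(16640 - 77824*m + 218240*m^2 - 468160*m^3 + 810448*m^4 - 1162704*m^5 + 1414132*m^6 - 1470912*m^7 + 1306068*m^8 - 985934*m^9 + 626800*m^10 - 326786*m^11 + 132549*m^12 - 38325*m^13 + 6659*m^14 - 271*m^15 - 245*m^16 + 191*m^17 - 108*m^18 + 28*m^19 + 2*m^20 - 2*m^21) * w^2 :=
      mul_nonneg (mul_nonneg (mul_nonneg (pow_nonneg hm0.le 4) hu.le) hG.le) (sq_nonneg w)
    have t1 : (0:ℝ) ≤ (m^2 * (240 - 664*m + 1252*m^2 - 1956*m^3 + 2371*m^4 - 2222*m^5 + 1701*m^6 - 1042*m^7 + 437*m^8 - 86*m^9 - 11*m^10 + 8*m^11 + (-1)*m^12)) * (lyapP00 m * x + lyapP01 m * v + lyapP02 m * w)^2 :=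
      mul_nonneg hR.le (sq_nonneg _)
    have t2 : (0:ℝ) ≤ ((m^2 * (240 - 664*m + 1252*m^2 - 1956*m^3 + 2371*m^4 - 2222*m^5 + 1701*m^6 - 1042*m^7 + 437*m^8 - 86*m^9 - 11*m^10 + 8*m^11 + (-1)*m^12)) * v + (-160*m^2 + 568*m^3 - 1192*m^4 + 2042*m^5 - 2767*m^6 + 2891*m^7 - 2426*m^8 + 1651*m^9 - 818*m^10 + 226*m^11 + (-1)*m^12 - 17*m^13 + 3*m^14) * w)^2 := sq_nonneg _
    linarith
  nlinarith [h2, mul_pos hp00 hR]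

lemma tendsto_of_sq_le {f S : ℕ → ℝ} (hf : ∀ t, f t ^ 2 ≤ S t)
    (hS : Tendsto S atTop (nhds 0)) : Tendsto f atTop (nhds 0) := by
  rw [tendsto_zero_iff_abs_tendsto_zero]
  have h2 : Tendsto (fun t => Real.sqrt (S t)) atTop (nhds 0) := by
    have := (Real.continuous_sqrt.tendsto 0).comp hS
    simpa [Function.comp_def] using this
  apply squeeze_zero (fun t => abs_nonneg _) (fun t => ?_) h2
  calc |f t| = Real.sqrt (f t ^ 2) := (Real.sqrt_sq_eq_abs _).symm
  _ ≤ Real.sqrt (S t) := Real.sqrt_le_sqrt (hf t)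

lemma mode_tendsto {m : ℝ} (hm0 : 0 < m) (hm1 : m < 1) (X V W : ℕ → ℝ)
    (hX : ∀ t, X (t+1) = X t + m^2 * V t)
    (hV : ∀ t, V (t+1) = -(X t) + (1-m) * V t + (m^2-m) * W t)
    (hW : ∀ t, W (t+1) = -(m * V t) + (1-m) * W t) :
    Tendsto X atTop (nhds 0) ∧ Tendsto V atTop (nhds 0) ∧ Tendsto W atTop (nhds 0) := by
  set S : ℕ → ℝ := fun t => X t ^ 2 + V t ^ 2 + W t ^ 2 with hS
  set L : ℕ → ℝ := fun t => lyapV m (X t) (V t) (W t) with hL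
  have hK := lyapK_pos hm0 hm1
  have hstep : ∀ t, L (t+1) = L t - lyapK m * S t := by
    intro t
    have : L (t+1) = lyapV m (X t + m^2 * V t) (-(X t) + (1-m) * V t + (m^2-m) * W t)
        (-(m * V t) + (1-m) * W t) := by rw [hL]; simp only; rw [hX t, hV t, hW t]
    rw [this, hS]
    exact lyapV_step m (X t) (V t) (W t)
  have hLnn : ∀ t, 0 ≤ L t := fun t => lyapV_nonneg hm0 hm1 _ _ _
  have htel : ∀ n, L n + lyapK m * ∑ t ∈ Finset.range n, S t = L 0 := by
    intro n
    induction n with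
    | zero => simp
    | succ n ih =>
      rw [Finset.sum_range_succ, mul_add, hstep n]
      linarith
  have hSnn : ∀ t, 0 ≤ S t := by
    intro t; rw [hS]; positivity
  have hsummable : Summable S := by
    apply summable_of_sum_range_le hSnn (c := L 0 / lyapK m)
    intro n
    rw [le_div_iff₀ hK]
    nlinarith [htel n, hLnn n]
  have hS0 : Tendsto S atTop (nhds 0) := hsummable.tendsto_atTop_zero
  refine ⟨tendsto_of_sq_le (fun t => ?_) hS0, tendsto_of_sq_le (fun t => ?_) hS0,
    tendsto_of_sq_le (fun t => ?_) hS0⟩ <;>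
  · rw [hS]; simp only; nlinarith [sq_nonneg (X t), sq_nonneg (V t), sq_nonneg (W t)]


lemma tendsto_coords {r : ℕ} (e : Fin r → Fin r → ℝ) (z : ℕ → Fin r → ℝ)
    (hrepr : ∀ t i, z t i = ∑ j, e j i * (e j ⬝ᵥ z t))
    (h : ∀ j, Tendsto (fun t => e j ⬝ᵥ z t) atTop (nhds 0)) :
    Tendsto z atTop (nhds 0) := by
  rw [tendsto_pi_nhds]
  intro i
  have heq : (fun t => z t i) = fun t => ∑ j, e j i * (e j ⬝ᵥ z t) :=
    funext fun t => hrepr t i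
  rw [heq]
  have := tendsto_finset_sum (Finset.univ : Finset (Fin r))
    (fun j _ => ((h j).const_mul (e j i)))
  simpa using this

lemma tendsto_mulVec_zero {r : ℕ} (M : Matrix (Fin r) (Fin r) ℝ) {z : ℕ → Fin r → ℝ}
    (h : Tendsto z atTop (nhds 0)) : Tendsto (fun t => M *ᵥ z t) atTop (nhds 0) := by
  rw [tendsto_pi_nhds] at h ⊢
  intro i
  have heq : (fun t => (M *ᵥ z t) i) = fun t => ∑ j, M i j * z t j := by
    funext t; simp [Matrix.mulVec, dotProduct]
  rw [heq]
  have := tendsto_finset_sum (Finset.univ : Finset (Fin r))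
    (fun j _ => (((h j).comp tendsto_id).const_mul (M i j)))
  simpa using this

lemma repr_eigen (r : ℕ) (B : Matrix (Fin r) (Fin r) ℝ) (hB : B.PosSemidef) :
    ∀ (y : Fin r → ℝ) (i : Fin r),
      y i = ∑ j, (⇑(hB.1.eigenvectorBasis j) : Fin r → ℝ) i
        * ((⇑(hB.1.eigenvectorBasis j) : Fin r → ℝ) ⬝ᵥ y) := by
  intro y i
  have hH : B.IsHermitian := hB.1
  have hUU : (hH.eigenvectorUnitary : Matrix (Fin r) (Fin r) ℝ)
      * star (hH.eigenvectorUnitary : Matrix (Fin r) (Fin r) ℝ) = 1 :=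
    (Matrix.mem_unitaryGroup_iff).mp (hH.eigenvectorUnitary).2
  have hy : (hH.eigenvectorUnitary : Matrix (Fin r) (Fin r) ℝ)
      *ᵥ (star (hH.eigenvectorUnitary : Matrix (Fin r) (Fin r) ℝ) *ᵥ y) = y := by
    rw [mulVec_mulVec, hUU, one_mulVec]
  conv_lhs => rw [← hy]
  simp only [Matrix.mulVec, dotProduct, Matrix.star_apply, star_trivial,
    Matrix.IsHermitian.eigenvectorUnitary_apply]


/-- Theorem 4: convergence of alternate SGD on the augmented bilinear
system: `A` invertible with largest singular value `σ_max` (the maximum of `‖Ax‖` over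
Euclidean unit vectors `x`), `B = (AAᵀ)^{1/2}`, `Aψ* = b`, `Aᵀθ* = c`, and step size `η`
with `0 < ησ_max < 1`. Then the alternate SGD iterates
`ψ_{t+1} = ψ_t + η(Aᵀθ_t − c)`, `φ_{t+1} = φ_t − ηB(θ_t + φ_t)`,
`θ_{t+1} = θ_t − η(Aψ_{t+1} − b + B(θ_t + φ_{t+1}))`
converge: `ψ_t → ψ*`, `θ_t → θ*`, `φ_t → −θ*`. -/
theorem stmt14 (r : ℕ) (A B : Matrix (Fin r) (Fin r) ℝ) (b c : Fin r → ℝ)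
    (hA : IsUnit A.det)
    (σmax : ℝ)
    (hσ : IsGreatest {t : ℝ | ∃ x : Fin r → ℝ,
      (∑ i, x i ^ 2) = 1 ∧ t = Real.sqrt (∑ i, ((A *ᵥ x) i) ^ 2)} σmax)
    (hB : B.PosSemidef) (hBsq : B * B = A * Aᵀ)
    (ψs θs : Fin r → ℝ) (hψs : A *ᵥ ψs = b) (hθs : Aᵀ *ᵥ θs = c)
    (η : ℝ) (hη0 : 0 < η * σmax) (hη1 : η * σmax < 1)
    (ψ φ θ : ℕ → Fin r → ℝ)
    (hψ : ∀ t, ψ (t + 1) = ψ t + η • (Aᵀ *ᵥ θ t - c))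
    (hφ : ∀ t, φ (t + 1) = φ t - η • (B *ᵥ (θ t + φ t)))
    (hθ : ∀ t, θ (t + 1) = θ t - η • (A *ᵥ ψ (t + 1) - b + B *ᵥ (θ t + φ (t + 1)))) :
    Tendsto ψ atTop (nhds ψs) ∧
    Tendsto θ atTop (nhds θs) ∧
    Tendsto φ atTop (nhds (-θs)) := by
  -- positivity of σmax and η
  have hσ0 : 0 ≤ σmax := by
    obtain ⟨x0, -, hx0⟩ := hσ.1
    rw [hx0]; exact Real.sqrt_nonneg _
  have hσpos : 0 < σmax :=
    lt_of_le_of_ne hσ0 (fun h => by rw [← h, mul_zero] at hη0; exact lt_irrefl 0 hη0)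
  have hηpos : 0 < η := by nlinarith
  -- spectral data of B
  have hH : B.IsHermitian := hB.1
  set d : Fin r → ℝ := hH.eigenvalues with hd
  set e : Fin r → (Fin r → ℝ) := fun j => ⇑(hH.eigenvectorBasis j) with he
  have f1 : ∀ j, B *ᵥ e j = d j • e j := fun j => hH.mulVec_eigenvectorBasis j
  have hBsymm : Bᵀ = B := by
    have h := hH
    unfold Matrix.IsHermitian at h
    simpa using h
  have hdetB : B.det ≠ 0 := by
    have h1 : B.det * B.det = A.det * A.det := by
      rw [← det_mul, hBsq, det_mul, det_transpose]
    have h2 : A.det ≠ 0 := hA.ne_zero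
    intro h
    rw [h, mul_zero] at h1
    exact h2 (by nlinarith)
  have f5 : ∀ j, 0 < d j := by
    intro j
    rcases lt_or_eq_of_le (hB.eigenvalues_nonneg j) with h | h
    · exact h
    · exfalso
      apply hdetB
      rw [hH.det_eq_prod_eigenvalues]
      exact Finset.prod_eq_zero (Finset.mem_univ j) (by simp [← h, hd])
  have f2 : ∀ j, e j ⬝ᵥ e j = 1 := by
    intro j
    have h := hH.eigenvectorBasis.orthonormal.1 j
    have h2 : (inner ℝ (hH.eigenvectorBasis j) (hH.eigenvectorBasis j) : ℝ) = 1 := by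
      rw [real_inner_self_eq_norm_sq, h]; norm_num
    rw [← h2]
    simp only [PiLp.inner_apply, RCLike.inner_apply, dotProduct, he, mul_comm, conj_trivial]
  have dp2 : ∀ y : Fin r → ℝ, (∑ i, y i ^ 2) = y ⬝ᵥ y := by
    intro y; simp [dotProduct, sq]
  have hdotB : ∀ j (z : Fin r → ℝ), e j ⬝ᵥ (B *ᵥ z) = d j * (e j ⬝ᵥ z) := by
    intro j z
    rw [dotProduct_mulVec, show B = Bᵀ from hBsymm.symm, vecMul_transpose, f1 j,
      smul_dotProduct]
    rfl
  have hdotBB : ∀ j (z : Fin r → ℝ), e j ⬝ᵥ ((B * B) *ᵥ z) = d j ^ 2 * (e j ⬝ᵥ z) := by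
    intro j z
    rw [← mulVec_mulVec, hdotB, hdotB]; ring
  -- eigenvalues bounded by σmax
  have f6 : ∀ j, d j ≤ σmax := by
    intro j
    have hAAT : (A * Aᵀ) *ᵥ e j = (d j ^ 2) • e j := by
      rw [← hBsq, ← mulVec_mulVec, f1 j, mulVec_smul, f1 j, smul_smul, sq]
    set x : Fin r → ℝ := (d j)⁻¹ • (Aᵀ *ᵥ e j) with hx
    have hdot : (Aᵀ *ᵥ e j) ⬝ᵥ (Aᵀ *ᵥ e j) = d j ^ 2 := by
      rw [dotProduct_mulVec, vecMul_transpose, mulVec_mulVec, hAAT, smul_dotProduct, f2 j]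
      simp
    have hxunit : (∑ i, x i ^ 2) = 1 := by
      have hne : d j ≠ 0 := (f5 j).ne'
      rw [dp2, hx, smul_dotProduct, dotProduct_smul, hdot, smul_eq_mul, smul_eq_mul, sq]
      field_simp
    have hAx : A *ᵥ x = d j • e j := by
      rw [hx, mulVec_smul, mulVec_mulVec, hAAT, smul_smul]
      congr 1
      field_simp [(f5 j).ne']
    have hnorm : (∑ i, ((A *ᵥ x) i) ^ 2) = d j ^ 2 := by
      rw [dp2, hAx, smul_dotProduct, dotProduct_smul, f2 j]
      simp [sq]
    exact hσ.2 ⟨x, hxunit, by rw [hnorm, Real.sqrt_sq (f5 j).le]⟩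
  -- error sequences
  set xs : ℕ → Fin r → ℝ := fun t => η • (A *ᵥ (ψ t - ψs)) with hxs
  set vs : ℕ → Fin r → ℝ := fun t => θ t - θs with hvs
  set ws : ℕ → Fin r → ℝ := fun t => φ t + θs with hws
  -- vector recurrences
  have V1 : ∀ t, xs (t+1) = xs t + (η*η) • ((B*B) *ᵥ vs t) := by
    intro t
    simp only [hxs, hvs]
    rw [hψ t, ← hθs]
    simp only [mulVec_add, mulVec_sub, mulVec_smul, mulVec_mulVec, smul_add, smul_sub,
      smul_smul, hBsq]
    module
  have V3 : ∀ t, ws (t+1) = ws t - η • (B *ᵥ vs t) - η • (B *ᵥ ws t) := by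
    intro t
    simp only [hws, hvs]
    rw [hφ t]
    simp only [mulVec_add, mulVec_sub, mulVec_smul, mulVec_mulVec, smul_add, smul_sub,
      smul_smul, hBsq]
    module
  have V2 : ∀ t, vs (t+1) = vs t - xs t - η • (B *ᵥ vs t) - η • (B *ᵥ ws t)
      + (η*η) • ((B*B) *ᵥ ws t) := by
    intro t
    simp only [hxs, hvs, hws]
    rw [hθ t, hφ t, hψ t, ← hθs, ← hψs]
    simp only [mulVec_add, mulVec_sub, mulVec_smul, mulVec_mulVec, smul_add, smul_sub,
      smul_smul, hBsq]
    module
  -- per-eigenvector scalar sequences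
  have hmode : ∀ j, Tendsto (fun t => e j ⬝ᵥ xs t) atTop (nhds 0)
      ∧ Tendsto (fun t => e j ⬝ᵥ vs t) atTop (nhds 0)
      ∧ Tendsto (fun t => e j ⬝ᵥ ws t) atTop (nhds 0) := by
    intro j
    have hm0 : 0 < η * d j := mul_pos hηpos (f5 j)
    have hm1 : η * d j < 1 :=
      lt_of_le_of_lt (mul_le_mul_of_nonneg_left (f6 j) hηpos.le) hη1
    apply mode_tendsto hm0 hm1
    · intro t
      rw [V1 t]
      simp only [dotProduct_add, dotProduct_sub, dotProduct_smul, smul_eq_mul,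
        hdotB, hdotBB]
      ring
    · intro t
      rw [V2 t]
      simp only [dotProduct_add, dotProduct_sub, dotProduct_smul, smul_eq_mul,
        hdotB, hdotBB]
      ring
    · intro t
      rw [V3 t]
      simp only [dotProduct_add, dotProduct_sub, dotProduct_smul, smul_eq_mul,
        hdotB, hdotBB]
      ring
  have hrepr : ∀ (z : ℕ → Fin r → ℝ), (∀ t i, z t i = ∑ j, e j i * (e j ⬝ᵥ z t)) :=
    fun z t i => repr_eigen r B hB (z t) i
  have hxs0 : Tendsto xs atTop (nhds 0) :=
    tendsto_coords e xs (hrepr xs) (fun j => (hmode j).1)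
  have hvs0 : Tendsto vs atTop (nhds 0) :=
    tendsto_coords e vs (hrepr vs) (fun j => (hmode j).2.1)
  have hws0 : Tendsto ws atTop (nhds 0) :=
    tendsto_coords e ws (hrepr ws) (fun j => (hmode j).2.2)
  refine ⟨?_, ?_, ?_⟩
  · -- ψ → ψs
    have h2 : Tendsto (fun t => A⁻¹ *ᵥ xs t) atTop (nhds 0) := tendsto_mulVec_zero _ hxs0
    have h3 : Tendsto (fun t => ψs + η⁻¹ • (A⁻¹ *ᵥ xs t)) atTop (nhds (ψs + η⁻¹ • 0)) :=
      tendsto_const_nhds.add (h2.const_smul η⁻¹)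
    rw [smul_zero, add_zero] at h3
    apply h3.congr
    intro t
    have hb : A⁻¹ *ᵥ xs t = η • (ψ t - ψs) := by
      show A⁻¹ *ᵥ (η • (A *ᵥ (ψ t - ψs))) = _
      rw [mulVec_smul, mulVec_mulVec, Matrix.nonsing_inv_mul A hA, one_mulVec]
    rw [hb, smul_smul, inv_mul_cancel₀ hηpos.ne', one_smul, add_sub_cancel]
  · -- θ → θs
    have h1 : Tendsto (fun t => vs t + θs) atTop (nhds (0 + θs)) :=
      hvs0.add tendsto_const_nhds
    rw [zero_add] at h1
    apply h1.congr
    intro t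
    show (θ t - θs) + θs = θ t
    abel
  · -- φ → -θs
    have h1 : Tendsto (fun t => ws t - θs) atTop (nhds (0 - θs)) :=
      hws0.sub tendsto_const_nhds
    rw [zero_sub] at h1
    apply h1.congr
    intro t
    show (φ t + θs) - θs = φ t
    abel
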